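/- For every natural number n ≥ 3, the ℝ-linear span of the set of special orthogonal matrices {A ∈ M_n(ℝ) : Aᵀ·A = 1 and det A = 1} is all of the matrix algebra M_n(ℝ). -/

import Mathlib

open Matrix Equiv

set_option maxRecDepth 8000
set_option maxHeartbeats 1600000

private lemma so_mem_aux {n : ℕ} (σ : Equiv.Perm (Fin n)) (d : Fin n → ℝ)
    (hd : ∀ k, d k * d k = 1)
    (hdet : ((Equiv.Perm.sign σ : ℤ) : ℝ) * ∏ k, d k = 1) :
    σ.permMatrix ℝ * Matrix.diagonal d ∈
      {A : Matrix (Fin n) (Fin n) ℝ | A.transpose * A = 1 ∧ A.det = 1} := by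
  have hPt : (σ.permMatrix ℝ)ᵀ * σ.permMatrix ℝ = 1 := by
    rw [← PEquiv.toMatrix_symm, ← PEquiv.toMatrix_trans, ← Equiv.toPEquiv_symm,
      ← Equiv.toPEquiv_trans]
    simp
  constructor
  · have h2 : (σ.permMatrix ℝ * Matrix.diagonal d)ᵀ * (σ.permMatrix ℝ * Matrix.diagonal d)
        = Matrix.diagonal d * (((σ.permMatrix ℝ)ᵀ * σ.permMatrix ℝ) * Matrix.diagonal d) := by
      rw [transpose_mul, diagonal_transpose, Matrix.mul_assoc, Matrix.mul_assoc]
    rw [h2, hPt, Matrix.one_mul, diagonal_mul_diagonal]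
    have h3 : (fun k => d k * d k) = (1 : Fin n → ℝ) := funext fun k => hd k
    rw [h3]
    exact Matrix.diagonal_one
  · rw [Matrix.det_mul, Matrix.det_permutation, Matrix.det_diagonal]
    exact_mod_cast hdet

private lemma so_diag_mem {n : ℕ} (d : Fin n → ℝ)
    (hd : ∀ k, d k * d k = 1) (hdet : ∏ k, d k = 1) :
    Matrix.diagonal d ∈
      {A : Matrix (Fin n) (Fin n) ℝ | A.transpose * A = 1 ∧ A.det = 1} := by
  constructor
  · rw [diagonal_transpose, diagonal_mul_diagonal]
    have h3 : (fun k => d k * d k) = (1 : Fin n → ℝ) := funext fun k => hd k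
    rw [h3]
    exact Matrix.diagonal_one
  · rw [Matrix.det_diagonal]; exact hdet

theorem stmt_6 (n : ℕ) (hn : 3 ≤ n) :
    Submodule.span ℝ
      {A : Matrix (Fin n) (Fin n) ℝ | A.transpose * A = 1 ∧ A.det = 1} = ⊤ := by
  set S : Set (Matrix (Fin n) (Fin n) ℝ) :=
    {A : Matrix (Fin n) (Fin n) ℝ | A.transpose * A = 1 ∧ A.det = 1} with hS
  -- 1 ∈ span
  have h1 : (1 : Matrix (Fin n) (Fin n) ℝ) ∈ Submodule.span ℝ S :=
    Submodule.subset_span ⟨by simp, by simp⟩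
  -- pairs of diagonal basis matrices
  have hpair : ∀ i j : Fin n, i ≠ j →
      (single i i (1:ℝ) + single j j 1) ∈ Submodule.span ℝ S := by
    intro i j hij
    have hmem : Matrix.diagonal (fun k => (if k = i then (-1:ℝ) else 1) * (if k = j then -1 else 1))
        ∈ Submodule.span ℝ S := by
      apply Submodule.subset_span
      apply so_diag_mem
      · intro k; split_ifs <;> norm_num
      · rw [Finset.prod_mul_distrib]
        simp [Finset.prod_ite_eq', hij]
    have hid : single i i (1:ℝ) + single j j 1
        = (2⁻¹ : ℝ) • ((1 : Matrix (Fin n) (Fin n) ℝ)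
            - Matrix.diagonal (fun k => (if k = i then (-1:ℝ) else 1) * (if k = j then -1 else 1))) := by
      ext a b
      simp only [Matrix.add_apply, Matrix.smul_apply, Matrix.sub_apply, Matrix.one_apply,
        Matrix.diagonal_apply, Matrix.single, Matrix.of_apply, smul_eq_mul, ite_and]
      split_ifs <;> subst_vars <;> first | tauto | norm_num
    rw [hid]
    exact Submodule.smul_mem _ _ (Submodule.sub_mem _ h1 hmem)
  -- single diagonal basis matrices
  have hdiag : ∀ i : Fin n, single i i (1:ℝ) ∈ Submodule.span ℝ S := by
    intro i
    have hcard : 1 < (Finset.univ.erase i).card := by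
      rw [Finset.card_erase_of_mem (Finset.mem_univ i)]
      simp only [Finset.card_univ, Fintype.card_fin]
      omega
    obtain ⟨j, hj, k, hk, hjk⟩ := Finset.one_lt_card.mp hcard
    have hji : j ≠ i := Finset.ne_of_mem_erase hj
    have hki : k ≠ i := Finset.ne_of_mem_erase hk
    have key : single i i (1:ℝ) = (2⁻¹ : ℝ) •
        ((single i i (1:ℝ) + single j j 1)
          + (single i i (1:ℝ) + single k k 1)
          - (single j j (1:ℝ) + single k k 1)) := by
      module
    rw [key]
    exact Submodule.smul_mem _ _ (Submodule.sub_mem _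
      (Submodule.add_mem _ (hpair i j hji.symm) (hpair i k hki.symm)) (hpair j k hjk))
  -- off-diagonal basis matrices
  have hoff : ∀ i j : Fin n, i ≠ j → single i j (1:ℝ) ∈ Submodule.span ℝ S := by
    intro i j hij
    have hcard : 0 < ((Finset.univ.erase i).erase j).card := by
      rw [Finset.card_erase_of_mem (Finset.mem_erase.mpr ⟨hij.symm, Finset.mem_univ j⟩),
        Finset.card_erase_of_mem (Finset.mem_univ i)]
      simp only [Finset.card_univ, Fintype.card_fin]
      omega
    obtain ⟨k, hk⟩ := Finset.card_pos.mp hcard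
    have hkj : k ≠ j := (Finset.mem_erase.mp hk).1
    have hki : k ≠ i := (Finset.mem_erase.mp (Finset.mem_erase.mp hk).2).1
    have hRS : ((Equiv.swap i j).permMatrix ℝ
        * Matrix.diagonal (fun k' => if k' = i then (-1:ℝ) else 1)) ∈ Submodule.span ℝ S := by
      apply Submodule.subset_span
      apply so_mem_aux
      · intro k'; split_ifs <;> norm_num
      · simp [Equiv.Perm.sign_swap hij, Finset.prod_ite_eq']
    have hTS : ((Equiv.swap i j).permMatrix ℝ
        * Matrix.diagonal (fun k' => if k' = k then (-1:ℝ) else 1)) ∈ Submodule.span ℝ S := by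
      apply Submodule.subset_span
      apply so_mem_aux
      · intro k'; split_ifs <;> norm_num
      · simp [Equiv.Perm.sign_swap hij, Finset.prod_ite_eq']
    have hRid : ((Equiv.swap i j).permMatrix ℝ
          * Matrix.diagonal (fun k' => if k' = i then (-1:ℝ) else 1))
        = 1 - single i i 1 - single j j 1
          + single i j 1 - single j i 1 := by
      ext a b
      simp only [Matrix.mul_diagonal, PEquiv.toMatrix_apply, Equiv.toPEquiv_apply,
        Option.mem_def, Option.some.injEq, Matrix.sub_apply, Matrix.add_apply,
        Matrix.one_apply, Matrix.single, Matrix.of_apply, Equiv.swap_apply_def, ite_and]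
      split_ifs <;> subst_vars <;> first | tauto | norm_num
    have hTid : ((Equiv.swap i j).permMatrix ℝ
          * Matrix.diagonal (fun k' => if k' = k then (-1:ℝ) else 1))
        = 1 - single i i 1 - single j j 1
          + single i j 1 + single j i 1 - (2:ℝ) • single k k 1 := by
      ext a b
      simp only [Matrix.mul_diagonal, PEquiv.toMatrix_apply, Equiv.toPEquiv_apply,
        Option.mem_def, Option.some.injEq, Matrix.sub_apply, Matrix.add_apply, Matrix.smul_apply,
        Matrix.one_apply, Matrix.single, Matrix.of_apply, Equiv.swap_apply_def, ite_and,
        smul_eq_mul]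
      split_ifs <;> subst_vars <;> first | tauto | norm_num
    rw [hRid] at hRS
    rw [hTid] at hTS
    have key : single i j (1:ℝ) = (2⁻¹ : ℝ) •
          ((1 - single i i 1 - single j j 1
              + single i j 1 - single j i 1)
            + (1 - single i i 1 - single j j 1
              + single i j 1 + single j i 1 - (2:ℝ) • single k k 1))
        - 1 + single i i 1 + single j j 1 + single k k 1 := by
      module
    rw [key]
    exact Submodule.add_mem _ (Submodule.add_mem _ (Submodule.add_mem _
      (Submodule.sub_mem _ (Submodule.smul_mem _ _ (Submodule.add_mem _ hRS hTS)) h1)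
      (hdiag i)) (hdiag j)) (hdiag k)
  have hstd : ∀ i j : Fin n, single i j (1:ℝ) ∈ Submodule.span ℝ S := by
    intro i j
    rcases eq_or_ne i j with rfl | hij
    · exact hdiag i
    · exact hoff i j hij
  rw [eq_top_iff]
  intro M _
  rw [matrix_eq_sum_single M]
  refine Submodule.sum_mem _ fun i _ => Submodule.sum_mem _ fun j _ => ?_
  have h : single i j (M i j) = M i j • single i j (1:ℝ) := by
    rw [smul_single, smul_eq_mul, mul_one]
  rw [h]
  exact Submodule.smul_mem _ _ (hstd i j)
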